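/- arXiv:1710.04824 — 4 statements merged into one kernel-verified Lean document; each statement's English description precedes it below -/
import Mathlib

section
/- Let K be symmetric positive definite and d, m, μ ∈ R^n satisfy the basic equation (d-m)^T K^{-1} (m-μ) = 1. Then (K + (m-μ)(m-μ)^T)^{-1}(d-μ) = K^{-1}(d-m); that is, the CE detector direction at such μ coincides exactly with the matched-filter direction. -/
open Matrix

lemma vecMulVec_mulVec' {n : ℕ} (w v x : Fin n → ℝ) :
    vecMulVec w v *ᵥ x = (v ⬝ᵥ x) • w := by
  ext i
  simp only [vecMulVec_apply, mulVec, dotProduct, Pi.smul_apply, smul_eq_mul,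
    Finset.sum_mul]
  exact Finset.sum_congr rfl fun j _ => by ring

lemma posSemidef_vecMulVec_self {n : ℕ} (w : Fin n → ℝ) :
    (vecMulVec w w).PosSemidef := by
  rw [posSemidef_iff_dotProduct_mulVec]
  constructor
  · ext i j; simp [vecMulVec_apply, mul_comm]
  · intro x
    rw [vecMulVec_mulVec']
    have hs : star x = x := by ext i; simp
    rw [hs, dotProduct_smul, smul_eq_mul, dotProduct_comm]
    exact mul_self_nonneg _

theorem CE_eq_MF (n : ℕ) (K : Matrix (Fin n) (Fin n) ℝ) (hK : K.PosDef)
    (d m μ : Fin n → ℝ)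
    (hbasic : (d - m) ⬝ᵥ (K⁻¹ *ᵥ (m - μ)) = 1) :
    (K + vecMulVec (m - μ) (m - μ))⁻¹ *ᵥ (d - μ) = K⁻¹ *ᵥ (d - m) := by
  set A := K + vecMulVec (m - μ) (m - μ) with hA
  have hApd : A.PosDef := hK.add_posSemidef (posSemidef_vecMulVec_self _)
  have hAinv : IsUnit A.det := isUnit_iff_ne_zero.mpr hApd.det_pos.ne'
  have hKinv : IsUnit K.det := isUnit_iff_ne_zero.mpr hK.det_pos.ne'
  have hsym : K⁻¹ᵀ = K⁻¹ := by
    have := hK.isHermitian.inv.eq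
    simpa using this
  have hdot : (m - μ) ⬝ᵥ (K⁻¹ *ᵥ (d - m)) = 1 := by
    rw [dotProduct_mulVec, ← Matrix.mulVec_transpose, hsym, dotProduct_comm]
    exact hbasic
  have key : A *ᵥ (K⁻¹ *ᵥ (d - m)) = d - μ := by
    rw [hA, add_mulVec, Matrix.mulVec_mulVec, Matrix.mul_nonsing_inv _ hKinv,
      Matrix.one_mulVec, vecMulVec_mulVec', hdot, one_smul]
    abel
  calc A⁻¹ *ᵥ (d - μ) = A⁻¹ *ᵥ (A *ᵥ (K⁻¹ *ᵥ (d - m))) := by rw [key]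
    _ = K⁻¹ *ᵥ (d - m) := by
        rw [Matrix.mulVec_mulVec, Matrix.nonsing_inv_mul _ hAinv, Matrix.one_mulVec]
end

section
/- Let K be symmetric positive definite and d, m ∈ R^n with d ≠ m. For every μ ∈ R^n, g(μ) := (d-μ)^T (K + (m-μ)(m-μ)^T)^{-1}(d-μ) ≤ (d-m)^T K^{-1}(d-m) + 1, with equality if and only if (d-m)^T K^{-1}(m-μ) = 1. -/
open Matrix

lemma matrix_ext_of_mulVec {n : ℕ} {A B : Matrix (Fin n) (Fin n) ℝ}
    (h : ∀ x, A *ᵥ x = B *ᵥ x) : A = B := by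
  ext i j
  have := congrFun (h (Pi.single j 1)) i
  simpa [mulVec_single] using this

lemma symm_dot {n : ℕ} {A : Matrix (Fin n) (Fin n) ℝ} (hA : Aᵀ = A) (x y : Fin n → ℝ) :
    x ⬝ᵥ (A *ᵥ y) = y ⬝ᵥ (A *ᵥ x) := by
  rw [Matrix.dotProduct_mulVec, ← mulVec_transpose, hA, dotProduct_comm]

theorem g_upper_bound (n : ℕ) (K : Matrix (Fin n) (Fin n) ℝ) (hK : K.PosDef)
    (d m : Fin n → ℝ) (hdm : d ≠ m) (μ : Fin n → ℝ) :
    (d - μ) ⬝ᵥ ((K + vecMulVec (m - μ) (m - μ))⁻¹ *ᵥ (d - μ)) ≤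
        (d - m) ⬝ᵥ (K⁻¹ *ᵥ (d - m)) + 1 ∧
    ((d - μ) ⬝ᵥ ((K + vecMulVec (m - μ) (m - μ))⁻¹ *ᵥ (d - μ)) =
        (d - m) ⬝ᵥ (K⁻¹ *ᵥ (d - m)) + 1 ↔
      (d - m) ⬝ᵥ (K⁻¹ *ᵥ (m - μ)) = 1) := by
  obtain ⟨v, hv⟩ : ∃ v', v' = m - μ := ⟨_, rfl⟩
  obtain ⟨s, hs⟩ : ∃ s', s' = d - m := ⟨_, rfl⟩
  have ha : d - μ = s + v := by rw [hs, hv]; abel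
  rw [← hv, ← hs, ha]
  have hKinv : K⁻¹.PosDef := hK.inv
  have hKsymm : K⁻¹ᵀ = K⁻¹ := by
    rw [transpose_nonsing_inv]; congr 1; exact hK.isHermitian.eq
  set γ : ℝ := v ⬝ᵥ (K⁻¹ *ᵥ v) with hγdef
  set β : ℝ := s ⬝ᵥ (K⁻¹ *ᵥ v) with hβdef
  set α : ℝ := s ⬝ᵥ (K⁻¹ *ᵥ s) with hαdef
  have hγ0 : 0 ≤ γ := by simpa using hKinv.posSemidef.re_dotProduct_nonneg v
  have hc : (0:ℝ) < 1 + γ := by linarith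
  have hKK : K * K⁻¹ = 1 := mul_nonsing_inv K (isUnit_iff_ne_zero.mpr hK.det_pos.ne')
  set N : Matrix (Fin n) (Fin n) ℝ :=
    K⁻¹ - (1 + γ)⁻¹ • (K⁻¹ * (vecMulVec v v * K⁻¹)) with hN
  have hNx : ∀ x : Fin n → ℝ,
      N *ᵥ x = K⁻¹ *ᵥ x - ((1 + γ)⁻¹ * (v ⬝ᵥ (K⁻¹ *ᵥ x))) • (K⁻¹ *ᵥ v) := by
    intro x
    rw [hN, sub_mulVec, smul_mulVec, ← mulVec_mulVec, ← mulVec_mulVec,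
      vecMulVec_mulVec', mulVec_smul, smul_smul]
  have h2 : K *ᵥ (K⁻¹ *ᵥ v) = v := by rw [mulVec_mulVec, hKK, one_mulVec]
  have hMN : (K + vecMulVec v v) * N = 1 := by
    apply matrix_ext_of_mulVec
    intro x
    have h1 : K *ᵥ (K⁻¹ *ᵥ x) = x := by rw [mulVec_mulVec, hKK, one_mulVec]
    rw [← mulVec_mulVec, one_mulVec, hNx x, add_mulVec, mulVec_sub, mulVec_sub,
      mulVec_smul, mulVec_smul, h1, h2, vecMulVec_mulVec', vecMulVec_mulVec']
    rw [show v ⬝ᵥ K⁻¹ *ᵥ v = γ from rfl]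
    have hne : (1:ℝ) + γ ≠ 0 := hc.ne'
    match_scalars <;> field_simp <;> ring
  have hMinv : (K + vecMulVec v v)⁻¹ = N := inv_eq_right_inv hMN
  have hsv : v ⬝ᵥ (K⁻¹ *ᵥ s) = β := symm_dot hKsymm v s
  have hg : (s + v) ⬝ᵥ ((K + vecMulVec v v)⁻¹ *ᵥ (s + v)) =
      α + 2 * β + γ - (1 + γ)⁻¹ * (β + γ) ^ 2 := by
    rw [hMinv, hNx, dotProduct_sub, dotProduct_smul, mulVec_add, dotProduct_add,
      add_dotProduct, add_dotProduct, dotProduct_add]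
    simp only [hsv, ← hαdef, ← hβdef, ← hγdef, smul_eq_mul]
    ring
  rw [hg]
  have hkey : α + 1 - (α + 2 * β + γ - (1 + γ)⁻¹ * (β + γ) ^ 2)
      = (β - 1) ^ 2 / (1 + γ) := by field_simp; ring
  constructor
  · nlinarith [div_nonneg (sq_nonneg (β - 1)) hc.le]
  · constructor
    · intro h
      have h0 : (β - 1) ^ 2 / (1 + γ) = 0 := by linarith
      have h1 : (β - 1) ^ 2 = 0 :=
        (div_eq_zero_iff.mp h0).resolve_right hc.ne'
      have hb : β - 1 = 0 := by
        exact pow_eq_zero_iff (by norm_num) |>.mp h1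
      linarith
    · intro h
      have hb1 : β = 1 := h
      rw [hb1]
      have hq : (1 + γ)⁻¹ * (1 + γ) ^ 2 = 1 + γ := by
        field_simp
      linarith
end

section
/- Let K be symmetric positive definite, d, m ∈ R^n with d ≠ m, and let R = K + m m^T (so R = the second-moment matrix when the mean is m and covariance K). Then d^T R^{-1} d ≤ (d-m)^T K^{-1} (d-m) + 1. Equivalently, the reciprocal output energy of CEM never exceeds that of the optimal CE detector. -/
open Matrix

theorem CEM_le_CE (n : ℕ) (K : Matrix (Fin n) (Fin n) ℝ) (hK : K.PosDef)
    (d m : Fin n → ℝ) (hdm : d ≠ m)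
    (R : Matrix (Fin n) (Fin n) ℝ) (hR : R = K + vecMulVec m m) :
    d ⬝ᵥ (R⁻¹ *ᵥ d) ≤ (d - m) ⬝ᵥ (K⁻¹ *ᵥ (d - m)) + 1 := by
  have hKinv : (K⁻¹).PosDef := hK.inv
  have hKt : Kᵀ = K := by
    have := hK.isHermitian.eq
    simpa [Matrix.conjTranspose_eq_transpose_of_trivial] using this
  have hKsym : K⁻¹ᵀ = K⁻¹ := by
    rw [Matrix.transpose_nonsing_inv, hKt]
  have hdet : IsUnit K.det := hK.det_pos.ne'.isUnit
  set α : ℝ := m ⬝ᵥ (K⁻¹ *ᵥ m) with hαdef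
  have hα : 0 ≤ α := by
    have := hKinv.posSemidef.re_dotProduct_nonneg m
    simpa using this
  have hpos : (0:ℝ) < 1 + α := by linarith
  -- key vecMulVec facts
  have hvmv : ∀ (v : Fin n → ℝ), vecMulVec m m *ᵥ v = (m ⬝ᵥ v) • m := by
    intro v
    ext i
    simp only [mulVec, dotProduct, vecMulVec_apply, Pi.smul_apply, smul_eq_mul,
      Finset.sum_mul]
    exact Finset.sum_congr rfl fun j _ => by ring
  have hmm : vecMulVec m m * K⁻¹ * vecMulVec m m = α • vecMulVec m m := by
    ext i j
    simp only [Matrix.mul_apply, vecMulVec_apply, Matrix.smul_apply, smul_eq_mul,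
      hαdef, dotProduct, mulVec, Finset.sum_mul, Finset.mul_sum]
    rw [Finset.sum_comm]
    refine Finset.sum_congr rfl fun k _ => Finset.sum_congr rfl fun l _ => by ring
  -- Sherman–Morrison inverse
  set S : Matrix (Fin n) (Fin n) ℝ :=
    K⁻¹ - (1 + α)⁻¹ • (K⁻¹ * vecMulVec m m * K⁻¹) with hSdef
  have h1 : vecMulVec m m * (K⁻¹ * vecMulVec m m * K⁻¹)
      = α • (vecMulVec m m * K⁻¹) := by
    rw [← Matrix.mul_assoc, ← Matrix.mul_assoc, hmm, smul_mul_assoc]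
  have h2 : K * (K⁻¹ * vecMulVec m m * K⁻¹) = vecMulVec m m * K⁻¹ := by
    rw [← Matrix.mul_assoc, ← Matrix.mul_assoc, Matrix.mul_nonsing_inv _ hdet,
      Matrix.one_mul]
  have hc : (1 + α)⁻¹ + (1 + α)⁻¹ * α = 1 := by
    field_simp
  have hRS : R * S = 1 := by
    rw [hR, hSdef, add_mul, mul_sub, mul_sub, Matrix.mul_nonsing_inv _ hdet,
      Matrix.mul_smul, Matrix.mul_smul, h1, h2, smul_smul]
    have hX : (1 + α)⁻¹ • (vecMulVec m m * K⁻¹)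
        + ((1 + α)⁻¹ * α) • (vecMulVec m m * K⁻¹) = vecMulVec m m * K⁻¹ := by
      rw [← add_smul, hc, one_smul]
    calc 1 - (1 + α)⁻¹ • (vecMulVec m m * K⁻¹)
          + (vecMulVec m m * K⁻¹ - ((1 + α)⁻¹ * α) • (vecMulVec m m * K⁻¹))
        = 1 + (vecMulVec m m * K⁻¹
            - ((1 + α)⁻¹ • (vecMulVec m m * K⁻¹)
              + ((1 + α)⁻¹ * α) • (vecMulVec m m * K⁻¹))) := by abel
      _ = 1 := by rw [hX]; simp
  have hRinv : R⁻¹ = S := Matrix.inv_eq_right_inv hRS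
  -- compute the quadratic forms
  set β : ℝ := m ⬝ᵥ (K⁻¹ *ᵥ d) with hβdef
  have hβ' : d ⬝ᵥ (K⁻¹ *ᵥ m) = β := by
    rw [Matrix.dotProduct_mulVec, ← Matrix.mulVec_transpose, hKsym, dotProduct_comm,
      hβdef]
  have hLHS : d ⬝ᵥ (R⁻¹ *ᵥ d) = d ⬝ᵥ (K⁻¹ *ᵥ d) - (1 + α)⁻¹ * β ^ 2 := by
    rw [hRinv, hSdef, Matrix.sub_mulVec, dotProduct_sub, Matrix.smul_mulVec,
      dotProduct_smul]
    rw [Matrix.mul_assoc, ← Matrix.mulVec_mulVec, ← Matrix.mulVec_mulVec, hvmv,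
      Matrix.mulVec_smul, dotProduct_smul, hβ', ← hβdef, smul_eq_mul, smul_eq_mul]
    ring
  have hRHS : (d - m) ⬝ᵥ (K⁻¹ *ᵥ (d - m)) = d ⬝ᵥ (K⁻¹ *ᵥ d) - 2 * β + α := by
    rw [Matrix.mulVec_sub, sub_dotProduct, dotProduct_sub, dotProduct_sub, hβ',
      ← hβdef, ← hαdef]
    ring
  rw [hLHS, hRHS]
  have expand : (1 + α)⁻¹ * (1 + α - β) ^ 2 = (1 + α) - 2 * β + (1 + α)⁻¹ * β ^ 2 := by
    field_simp
    ring
  have hnn : 0 ≤ (1 + α)⁻¹ * (1 + α - β) ^ 2 :=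
    mul_nonneg (inv_nonneg.mpr hpos.le) (sq_nonneg _)
  linarith [expand ▸ hnn]
end

section
/- Let K be symmetric positive definite, d, m ∈ R^n, d ≠ m, and suppose μ1, μ2 both satisfy (d-m)^T K^{-1}(m-μ) = 1. Then (K + (m-μ1)(m-μ1)^T)^{-1}(d-μ1) = (K + (m-μ2)(m-μ2)^T)^{-1}(d-μ2); i.e., all solutions of the basic equation yield the same (unnormalized) detector vector. -/
open Matrix

lemma vecMulVec_self_posSemidef {n : ℕ} (v : Fin n → ℝ) :
    (vecMulVec v v).PosSemidef := by
  rw [posSemidef_iff_dotProduct_mulVec]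
  constructor
  · ext i j; simp [vecMulVec_apply, mul_comm, Matrix.conjTranspose_apply]
  · intro x
    simp only [vecMulVec_mulVec', dotProduct_smul, RCLike.star_def, star_trivial]
    rw [show v ⬝ᵥ x = x ⬝ᵥ v from dotProduct_comm _ _]
    simpa [smul_eq_mul, dotProduct_comm] using mul_self_nonneg (x ⬝ᵥ v)

lemma key {n : ℕ} (K : Matrix (Fin n) (Fin n) ℝ) (hK : K.PosDef) (d m μ : Fin n → ℝ)
    (h : (d - m) ⬝ᵥ (K⁻¹ *ᵥ (m - μ)) = 1) :
    (K + vecMulVec (m - μ) (m - μ))⁻¹ *ᵥ (d - μ) = K⁻¹ *ᵥ (d - m) := by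
  set v := m - μ with hv
  have hA : (K + vecMulVec v v).PosDef := hK.add_posSemidef (vecMulVec_self_posSemidef v)
  have hAinv : IsUnit (K + vecMulVec v v).det := isUnit_iff_ne_zero.mpr hA.det_pos.ne'
  have hKinv : IsUnit K.det := isUnit_iff_ne_zero.mpr hK.det_pos.ne'
  -- symmetry of K⁻¹
  have hsym : K⁻¹ᵀ = K⁻¹ := by
    have := hK.inv.isHermitian
    simpa [Matrix.IsHermitian, Matrix.conjTranspose_eq_transpose_of_trivial] using this
  have hdot : v ⬝ᵥ (K⁻¹ *ᵥ (d - m)) = 1 := by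
    rw [dotProduct_mulVec, ← mulVec_transpose, hsym, dotProduct_comm]
    exact h
  have hmain : (K + vecMulVec v v) *ᵥ (K⁻¹ *ᵥ (d - m)) = d - μ := by
    rw [add_mulVec, vecMulVec_mulVec', hdot, one_smul, mulVec_mulVec,
      mul_nonsing_inv _ hKinv, one_mulVec]
    rw [hv]; abel
  calc (K + vecMulVec v v)⁻¹ *ᵥ (d - μ)
      = (K + vecMulVec v v)⁻¹ *ᵥ ((K + vecMulVec v v) *ᵥ (K⁻¹ *ᵥ (d - m))) := by rw [hmain]
    _ = K⁻¹ *ᵥ (d - m) := by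
        rw [mulVec_mulVec, nonsing_inv_mul _ hAinv, one_mulVec]

theorem detector_independent_of_mu (n : ℕ) (K : Matrix (Fin n) (Fin n) ℝ)
    (hK : K.PosDef) (d m : Fin n → ℝ) (hdm : d ≠ m) (μ₁ μ₂ : Fin n → ℝ)
    (h1 : (d - m) ⬝ᵥ (K⁻¹ *ᵥ (m - μ₁)) = 1)
    (h2 : (d - m) ⬝ᵥ (K⁻¹ *ᵥ (m - μ₂)) = 1) :
    (K + vecMulVec (m - μ₁) (m - μ₁))⁻¹ *ᵥ (d - μ₁) =
      (K + vecMulVec (m - μ₂) (m - μ₂))⁻¹ *ᵥ (d - μ₂) := by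
  rw [key K hK d m μ₁ h1, key K hK d m μ₂ h2]
end
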